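/- For any two-player weighted game arena G with reachability objective C_i for Player i, the regret of Player i is finite if and only if Player i has a winning strategy (a strategy all of whose outcomes visit C_i). -/

import Mathlib

open scoped ENat

/-- A strategy maps a finite play (history, current position last) to the chosen
next position. -/
abbrev Strat (S : Type) := List S → S

/-- A two-player turn-based game arena: an ownership function (`true` = Player 1,
`false` = Player 2), an initial position and a transition relation. -/
structure Arena (S : Type) where
  owner : S → Bool
  init : S
  edge : S → S → Prop

namespace Arena

variable {S : Type}

/-- A strategy is valid if it always follows edges of the arena. -/
def Valid (A : Arena S) (σ : Strat S) : Prop :=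
  ∀ l : List S, A.edge (l.getLastD A.init) (σ l)

/-- Combine the strategy `σi` of player `i` with the strategy `σo` of her
opponent into a strategy profile. -/
def pairFor (i : Bool) (σi σo : Strat S) : Bool → Strat S :=
  fun b => if b = i then σi else σo

/-- The prefix of length `n` of the outcome of a strategy profile. -/
def outList (A : Arena S) (σ : Bool → Strat S) : ℕ → List S
  | 0 => [A.init]
  | n + 1 =>
      let l := outList A σ n
      l ++ [σ (A.owner (l.getLastD A.init)) l]

/-- The position reached after `n` rounds. -/
def cur (A : Arena S) (σ : Bool → Strat S) (n : ℕ) : S :=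
  (A.outList σ n).getLastD A.init

/-- The total weight of a finite play. -/
def pathWeight (w : S → S → ℕ) (l : List S) : ℕ :=
  ((l.zip l.tail).map fun p => w p.1 p.2).sum

/-- `n` is the round of the first visit of the outcome to the target set `C`. -/
def firstVisit (A : Arena S) (C : Set S) (σ : Bool → Strat S) (n : ℕ) : Prop :=
  A.cur σ n ∈ C ∧ ∀ m < n, A.cur σ m ∉ C

/-- The utility of a strategy profile w.r.t. edge weights `w` and target set `C`:
the sum of the weights up to the first visit to `C`, and `⊤` if `C` is never
visited. -/
noncomputable def util (A : Arena S) (w : S → S → ℕ) (C : Set S)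
    (σ : Bool → Strat S) : ℕ∞ :=
  ⨅ (n : ℕ) (_ : A.firstVisit C σ n), (pathWeight w (A.outList σ n) : ℕ∞)

/-- A strategy of player `i` is winning if all its outcomes against valid
opposing strategies visit the target set `C`. -/
def Winning (A : Arena S) (C : Set S) (i : Bool) (σi : Strat S) : Prop :=
  ∀ σo : Strat S, A.Valid σo → ∃ n, A.cur (pairFor i σi σo) n ∈ C

/-- Best response value of player `i` against opposing strategy `σo`. -/
noncomputable def br (A : Arena S) (w : S → S → ℕ) (C : Set S)
    (i : Bool) (σo : Strat S) : ℕ∞ :=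
  ⨅ (σi : Strat S) (_ : A.Valid σi), A.util w C (pairFor i σi σo)

end Arena

/-- Regret of utility `u` w.r.t. best-response value `b`, with the convention
`⊤ - ⊤ = ⊤`. -/
noncomputable def regPairVal (u b : ℕ∞) : ℕ∞ := if u = ⊤ then ⊤ else u - b

namespace Arena

variable {S : Type}

/-- The regret of strategy `σi` of player `i`. -/
noncomputable def regOf (A : Arena S) (w : S → S → ℕ) (C : Set S)
    (i : Bool) (σi : Strat S) : ℕ∞ :=
  ⨆ (σo : Strat S) (_ : A.Valid σo),
    regPairVal (A.util w C (pairFor i σi σo)) (A.br w C i σo)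

/-- The minimal regret of player `i`. -/
noncomputable def regMin (A : Arena S) (w : S → S → ℕ) (C : Set S) (i : Bool) : ℕ∞ :=
  ⨅ (σi : Strat S) (_ : A.Valid σi), A.regOf w C i σi

end Arena


section RegAux

set_option linter.unusedSectionVars false

open Classical

variable {S : Type} [Fintype S]

/-- Attractor levels for player `i` towards target `C`. -/
def attr (A : Arena S) (C : Set S) (i : Bool) : ℕ → Set S
  | 0 => C
  | n + 1 => attr A C i n ∪
      {s | if A.owner s = i then ∃ t, A.edge s t ∧ t ∈ attr A C i n
           else ∀ t, A.edge s t → t ∈ attr A C i n}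

lemma attr_mono (A : Arena S) (C : Set S) (i : Bool) {m n : ℕ} (h : m ≤ n) :
    attr A C i m ⊆ attr A C i n := by
  induction h with
  | refl => exact fun _ h => h
  | step _ ih => exact fun s hs => Set.mem_union_left _ (ih hs)

lemma mem_attr_succ_of_owner (A : Arena S) (C : Set S) (i : Bool) {n : ℕ} {s t : S}
    (hown : A.owner s = i) (he : A.edge s t) (ht : t ∈ attr A C i n) :
    s ∈ attr A C i (n + 1) :=
  Set.mem_union_right _ (by rw [Set.mem_setOf_eq, if_pos hown]; exact ⟨t, he, ht⟩)

lemma mem_attr_succ_of_opp (A : Arena S) (C : Set S) (i : Bool) {n : ℕ} {s : S}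
    (hown : ¬ A.owner s = i) (h : ∀ t, A.edge s t → t ∈ attr A C i n) :
    s ∈ attr A C i (n + 1) :=
  Set.mem_union_right _ (by rw [Set.mem_setOf_eq, if_neg hown]; exact h)

/-- Minimal attractor level of a point in the attractor but not in the target. -/
lemma exists_level (A : Arena S) (C : Set S) (i : Bool) {s : S}
    (hA : ∃ n, s ∈ attr A C i n) (hC : s ∉ C) :
    ∃ k, s ∈ attr A C i (k + 1) ∧ s ∉ attr A C i k ∧
      ∀ k', s ∈ attr A C i (k' + 1) → k ≤ k' := by
  classical
  have h0 : Nat.find hA ≠ 0 := by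
    intro h
    have := Nat.find_spec hA
    rw [h] at this
    exact hC this
  obtain ⟨k, hk⟩ := Nat.exists_eq_succ_of_ne_zero h0
  refine ⟨k, ?_, ?_, ?_⟩
  · have := Nat.find_spec hA; rwa [hk] at this
  · intro hmem
    have := Nat.find_min' hA hmem
    omega
  · intro k' hk'
    have := Nat.find_min' hA hk'
    omega

/-- From a non-target attractor point owned by `i` there is an edge that
satisfies the uniform level-decrease property. -/
lemma exists_progress (A : Arena S) (C : Set S) (i : Bool) {s : S}
    (hA : ∃ n, s ∈ attr A C i n) (hC : s ∉ C) (hown : A.owner s = i) :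
    ∃ t, A.edge s t ∧ ∀ k, s ∈ attr A C i (k + 1) → t ∈ attr A C i k := by
  obtain ⟨k, hmem, hnot, hmin⟩ := exists_level A C i hA hC
  rcases hmem with hmem | hmem
  · exact absurd hmem hnot
  · rw [Set.mem_setOf_eq, if_pos hown] at hmem
    obtain ⟨t, he, ht⟩ := hmem
    exact ⟨t, he, fun k' hk' => attr_mono A C i (hmin k' hk') ht⟩

/-- From a non-target attractor point owned by the opponent, every edge
satisfies the uniform level-decrease property. -/
lemma all_progress (A : Arena S) (C : Set S) (i : Bool) {s : S}
    (hA : ∃ n, s ∈ attr A C i n) (hC : s ∉ C) (hown : ¬ A.owner s = i) :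
    ∀ t, A.edge s t → ∀ k, s ∈ attr A C i (k + 1) → t ∈ attr A C i k := by
  obtain ⟨k, hmem, hnot, hmin⟩ := exists_level A C i hA hC
  rcases hmem with hmem | hmem
  · exact absurd hmem hnot
  · rw [Set.mem_setOf_eq, if_neg hown] at hmem
    exact fun t he k' hk' => attr_mono A C i (hmin k' hk') (hmem t he)

/-- Escape lemma: from outside the attractor the opponent can stay outside. -/
lemma escape (A : Arena S) (C : Set S) (i : Bool) {s : S}
    (hs : ¬ ∃ n, s ∈ attr A C i n) (hown : ¬ A.owner s = i) :
    ∃ t, A.edge s t ∧ ¬ ∃ n, t ∈ attr A C i n := by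
  by_contra h
  push_neg at h
  classical
  set f : S → ℕ := fun t => if ht : ∃ n, t ∈ attr A C i n then Nat.find ht else 0 with hf
  set N := Finset.univ.sup f with hN
  refine hs ⟨N + 1, mem_attr_succ_of_opp A C i hown fun t he => ?_⟩
  have ht : ∃ n, t ∈ attr A C i n := h t he
  have h1 : t ∈ attr A C i (f t) := by
    rw [hf]; simp only [dif_pos ht]; exact Nat.find_spec ht
  exact attr_mono A C i (Finset.le_sup (Finset.mem_univ t)) h1

/-- If the owner `i` moves along an edge out of the attractor, she was out. -/
lemma not_mem_attr_of_edge (A : Arena S) (C : Set S) (i : Bool) {s t : S}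
    (hs : ¬ ∃ n, s ∈ attr A C i n) (hown : A.owner s = i) (he : A.edge s t) :
    ¬ ∃ n, t ∈ attr A C i n := by
  rintro ⟨n, hn⟩
  exact hs ⟨n + 1, mem_attr_succ_of_owner A C i hown he hn⟩

/-- The attractor-following strategy of player `i`. -/
noncomputable def stratFor (A : Arena S) (C : Set S) (i : Bool)
    (hsucc : ∀ s : S, ∃ t : S, A.edge s t) : Strat S :=
  fun l =>
    let s := l.getLastD A.init
    if h : ∃ t, A.edge s t ∧ ∀ k, s ∈ attr A C i (k + 1) → t ∈ attr A C i k
    then h.choose else (hsucc s).choose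

lemma stratFor_valid (A : Arena S) (C : Set S) (i : Bool)
    (hsucc : ∀ s : S, ∃ t : S, A.edge s t) : A.Valid (stratFor A C i hsucc) := by
  intro l
  unfold stratFor
  by_cases h : ∃ t, A.edge (l.getLastD A.init) t ∧
      ∀ k, l.getLastD A.init ∈ attr A C i (k + 1) → t ∈ attr A C i k
  · simp only [dif_pos h]; exact h.choose_spec.1
  · simp only [dif_neg h]; exact (hsucc _).choose_spec

lemma stratFor_progress (A : Arena S) (C : Set S) (i : Bool)
    (hsucc : ∀ s : S, ∃ t : S, A.edge s t) (l : List S)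
    (hA : ∃ n, l.getLastD A.init ∈ attr A C i n) (hC : l.getLastD A.init ∉ C)
    (hown : A.owner (l.getLastD A.init) = i) :
    ∀ k, l.getLastD A.init ∈ attr A C i (k + 1) →
      stratFor A C i hsucc l ∈ attr A C i k := by
  have h : ∃ t, A.edge (l.getLastD A.init) t ∧
      ∀ k, l.getLastD A.init ∈ attr A C i (k + 1) → t ∈ attr A C i k :=
    exists_progress A C i hA hC hown
  intro k hk
  unfold stratFor
  simp only [dif_pos h]
  exact h.choose_spec.2 k hk

/-- The spoiling strategy of the opponent of player `i`. -/
noncomputable def spoiler (A : Arena S) (C : Set S) (i : Bool)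
    (hsucc : ∀ s : S, ∃ t : S, A.edge s t) : Strat S :=
  fun l =>
    let s := l.getLastD A.init
    if h : ∃ t, A.edge s t ∧ ¬ ∃ n, t ∈ attr A C i n
    then h.choose else (hsucc s).choose

lemma spoiler_valid (A : Arena S) (C : Set S) (i : Bool)
    (hsucc : ∀ s : S, ∃ t : S, A.edge s t) : A.Valid (spoiler A C i hsucc) := by
  intro l
  unfold spoiler
  by_cases h : ∃ t, A.edge (l.getLastD A.init) t ∧ ¬ ∃ n, t ∈ attr A C i n
  · simp only [dif_pos h]; exact h.choose_spec.1
  · simp only [dif_neg h]; exact (hsucc _).choose_spec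

lemma cur_zero (A : Arena S) (σ : Bool → Strat S) : A.cur σ 0 = A.init := rfl

lemma cur_succ (A : Arena S) (σ : Bool → Strat S) (n : ℕ) :
    A.cur σ (n + 1) = σ (A.owner (A.cur σ n)) (A.outList σ n) := by
  show (A.outList σ (n+1)).getLastD A.init = _
  show ((A.outList σ n) ++ [σ (A.owner ((A.outList σ n).getLastD A.init)) (A.outList σ n)]).getLastD A.init = _
  rw [List.getLastD_concat]
  rfl

lemma getLastD_outList (A : Arena S) (σ : Bool → Strat S) (n : ℕ) :
    (A.outList σ n).getLastD A.init = A.cur σ n := rfl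

lemma length_outList (A : Arena S) (σ : Bool → Strat S) (n : ℕ) :
    (A.outList σ n).length = n + 1 := by
  induction n with
  | zero => rfl
  | succ n ih => show ((A.outList σ n) ++ _).length = _ ; simp [ih]

lemma pathWeight_le (w : S → S → ℕ) (l : List S) (W : ℕ) (hW : ∀ s t : S, w s t ≤ W) :
    Arena.pathWeight w l ≤ (l.length) * W := by
  unfold Arena.pathWeight
  have h1 : ∀ x ∈ (l.zip l.tail).map fun p => w p.1 p.2, x ≤ W := by
    intro x hx
    simp only [List.mem_map] at hx
    obtain ⟨p, _, rfl⟩ := hx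
    exact hW p.1 p.2
  have h2 := List.sum_le_card_nsmul _ W h1
  rw [smul_eq_mul] at h2
  refine h2.trans (Nat.mul_le_mul_right _ ?_)
  simp only [List.length_map, List.length_zip, List.length_tail]
  omega

end RegAux

/-- In a weighted game arena, the regret of Player `i` is finite
iff Player `i` has a winning strategy. -/
theorem regret_finite_iff_winning {S : Type} [Fintype S] (A : Arena S)
    (hsucc : ∀ s : S, ∃ t : S, A.edge s t)
    (w : S → S → ℕ) (C : Set S) (i : Bool) :
    A.regMin w C i < ⊤ ↔ ∃ σi : Strat S, A.Valid σi ∧ A.Winning C i σi := by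
  classical
  constructor
  · -- regret finite implies a winning strategy exists
    intro hfin
    by_contra hno
    push_neg at hno
    have hreg : A.regMin w C i = ⊤ := by
      refine le_antisymm le_top (le_iInf₂ fun σi hv => ?_)
      have hnw : ¬ A.Winning C i σi := hno σi hv
      unfold Arena.Winning at hnw
      push_neg at hnw
      obtain ⟨σo, hov, hC⟩ := hnw
      have hutil : A.util w C (Arena.pairFor i σi σo) = ⊤ := by
        have hfv : ∀ n, ¬ A.firstVisit C (Arena.pairFor i σi σo) n := by
          intro n hn
          exact hC n hn.1
        simp [Arena.util, iInf_neg (hfv _)]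
      have : regPairVal (A.util w C (Arena.pairFor i σi σo))
          (A.br w C i σo) = ⊤ := by
        rw [hutil, regPairVal, if_pos rfl]
      calc (⊤ : ℕ∞) = _ := this.symm
        _ ≤ A.regOf w C i σi := le_iSup₂ (f := fun σo (_ : A.Valid σo) =>
            regPairVal (A.util w C (Arena.pairFor i σi σo)) (A.br w C i σo)) σo hov
    rw [hreg] at hfin
    exact lt_irrefl _ hfin
  · -- a winning strategy implies finite regret
    rintro ⟨σi₀, hv₀, hwin⟩
    -- Step A: the initial position is in the attractor
    have hinitA : ∃ n, A.init ∈ attr A C i n := by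
      by_contra hinit
      have hout : ∀ n, ¬ ∃ k,
          A.cur (Arena.pairFor i σi₀ (spoiler A C i hsucc)) n ∈ attr A C i k := by
        intro n
        induction n with
        | zero => rw [cur_zero]; exact hinit
        | succ n ih =>
          set σ := Arena.pairFor i σi₀ (spoiler A C i hsucc) with hσ
          rw [cur_succ]
          by_cases hown : A.owner (A.cur σ n) = i
          · have hpair : σ (A.owner (A.cur σ n)) = σi₀ := by
              rw [hσ]; simp only [Arena.pairFor]; rw [if_pos hown]
            rw [hpair]
            have he : A.edge (A.cur σ n) (σi₀ (A.outList σ n)) := by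
              have := hv₀ (A.outList σ n)
              rwa [getLastD_outList] at this
            exact not_mem_attr_of_edge A C i ih hown he
          · have hpair : σ (A.owner (A.cur σ n)) = spoiler A C i hsucc := by
              rw [hσ]; simp only [Arena.pairFor]; rw [if_neg hown]
            rw [hpair]
            have h : ∃ t, A.edge (A.cur σ n) t ∧ ¬ ∃ k, t ∈ attr A C i k :=
              escape A C i ih hown
            unfold spoiler
            rw [getLastD_outList]
            simp only [dif_pos h]
            exact h.choose_spec.2
      obtain ⟨n, hn⟩ := hwin (spoiler A C i hsucc) (spoiler_valid A C i hsucc)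
      exact hout n ⟨0, hn⟩
    obtain ⟨r₀, hr₀⟩ := hinitA
    -- the attractor strategy
    set σi := stratFor A C i hsucc with hσi
    set W := Finset.univ.sup (fun p : S × S => w p.1 p.2) with hWdef
    have hW : ∀ s t : S, w s t ≤ W := fun s t =>
      Finset.le_sup (f := fun p : S × S => w p.1 p.2) (Finset.mem_univ (s, t))
    -- against any valid opponent, the outcome visits C within r₀ steps
    have hvisit : ∀ σo, A.Valid σo → ∃ m ≤ r₀,
        A.cur (Arena.pairFor i σi σo) m ∈ C := by
      intro σo hov
      set σ := Arena.pairFor i σi σo with hσ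
      by_contra hcon
      push_neg at hcon
      have hinv : ∀ n ≤ r₀, ∃ k, A.cur σ n ∈ attr A C i k ∧ k + n ≤ r₀ := by
        intro n
        induction n with
        | zero => intro _; exact ⟨r₀, hr₀, by omega⟩
        | succ n ih =>
          intro hn
          obtain ⟨k, hk, hkle⟩ := ih (by omega)
          have hCn : A.cur σ n ∉ C := hcon n (by omega)
          have hAn : ∃ j, A.cur σ n ∈ attr A C i j := ⟨k, hk⟩
          obtain ⟨k₀, hk₀mem, _, hk₀min⟩ := exists_level A C i hAn hCn
          have hkpos : k ≠ 0 := by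
            intro h; rw [h] at hk; exact hCn hk
          have hk₀lt : k₀ + 1 ≤ k := by
            have : k₀ ≤ k - 1 := hk₀min (k - 1) (by
              have : k - 1 + 1 = k := by omega
              rwa [this])
            omega
          refine ⟨k₀, ?_, by omega⟩
          rw [cur_succ]
          by_cases hown : A.owner (A.cur σ n) = i
          · have hpair : σ (A.owner (A.cur σ n)) = σi := by
              rw [hσ]; simp only [Arena.pairFor]; rw [if_pos hown]
            rw [hpair, hσi]
            have := stratFor_progress A C i hsucc (A.outList σ n)
              (by rw [getLastD_outList]; exact hAn)
              (by rw [getLastD_outList]; exact hCn)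
              (by rw [getLastD_outList]; exact hown)
            rw [getLastD_outList] at this
            exact this k₀ hk₀mem
          · have hpair : σ (A.owner (A.cur σ n)) = σo := by
              rw [hσ]; simp only [Arena.pairFor]; rw [if_neg hown]
            rw [hpair]
            have he : A.edge (A.cur σ n) (σo (A.outList σ n)) := by
              have := hov (A.outList σ n)
              rwa [getLastD_outList] at this
            exact all_progress A C i hAn hCn hown _ he k₀ hk₀mem
      obtain ⟨k, hk, hkle⟩ := hinv r₀ le_rfl
      have : k = 0 := by omega
      rw [this] at hk
      exact hcon r₀ le_rfl hk
    -- bound the utility against any valid opponent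
    have hutil : ∀ σo, A.Valid σo →
        A.util w C (Arena.pairFor i σi σo) ≤ (((r₀ + 1) * W : ℕ) : ℕ∞) := by
      intro σo hov
      obtain ⟨m, hm, hmC⟩ := hvisit σo hov
      set σ := Arena.pairFor i σi σo with hσ
      have hex : ∃ n, A.cur σ n ∈ C := ⟨m, hmC⟩
      set n₀ := Nat.find hex with hn₀
      have hfv : A.firstVisit C σ n₀ :=
        ⟨Nat.find_spec hex, fun j hj => Nat.find_min hex hj⟩
      have hn₀le : n₀ ≤ r₀ := le_trans (Nat.find_min' hex hmC) hm
      calc A.util w C σ ≤ (Arena.pathWeight w (A.outList σ n₀) : ℕ∞) := by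
            refine iInf_le_of_le n₀ ?_
            exact iInf_le_of_le hfv le_rfl
        _ ≤ (((r₀ + 1) * W : ℕ) : ℕ∞) := by
            rw [Nat.cast_le]
            calc Arena.pathWeight w (A.outList σ n₀)
                ≤ (A.outList σ n₀).length * W := pathWeight_le w _ W hW
              _ = (n₀ + 1) * W := by rw [length_outList]
              _ ≤ (r₀ + 1) * W := Nat.mul_le_mul_right _ (by omega)
    -- conclude
    have hreg : A.regOf w C i σi ≤ (((r₀ + 1) * W : ℕ) : ℕ∞) := by
      refine iSup₂_le fun σo hov => ?_
      have hu := hutil σo hov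
      have hne : A.util w C (Arena.pairFor i σi σo) ≠ ⊤ :=
        ne_top_of_le_ne_top (ENat.coe_ne_top _) hu
      rw [regPairVal, if_neg hne]
      exact le_trans tsub_le_self hu
    have hle : A.regMin w C i ≤ A.regOf w C i σi :=
      iInf₂_le σi (stratFor_valid A C i hsucc)
    exact lt_of_le_of_lt (le_trans hle hreg) (ENat.coe_lt_top _)
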